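/- Let C be a cocomplete category and M : C → C a monad that preserves reflexive coequalizers. Then the category of M-algebras (the Eilenberg–Moore category of M) is cocomplete. -/

import Mathlib

open CategoryTheory CategoryTheory.Limits

universe v u

section Aux

variable {C : Type u} [Category.{v} C] [HasColimits C] (M : Monad C)

/-- The Eilenberg–Moore category has reflexive coequalizers when `M` preserves them. -/
theorem algebra_hasReflexiveCoequalizers
    (hM : ∀ {A B : C} (f g : A ⟶ B), IsReflexivePair f g →
      PreservesColimit (parallelPair f g) M.toFunctor) :
    HasReflexiveCoequalizers (Monad.Algebra M) := by
  constructor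
  intro A B f g hp
  obtain ⟨s, hs1, hs2⟩ := hp.common_section'
  have h1 : s.f ≫ f.f = 𝟙 _ := by simpa using congrArg Monad.Algebra.Hom.f hs1
  have h2 : s.f ≫ g.f = 𝟙 _ := by simpa using congrArg Monad.Algebra.Hom.f hs2
  have hpf : IsReflexivePair f.f g.f := IsReflexivePair.mk' s.f h1 h2
  have hpMf : IsReflexivePair (M.toFunctor.map f.f) (M.toFunctor.map g.f) :=
    IsReflexivePair.mk' (M.toFunctor.map s.f)
      (by rw [← Functor.map_comp, h1]; simp)
      (by rw [← Functor.map_comp, h2]; simp)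
  have e1 : parallelPair f.f g.f ≅ parallelPair f g ⋙ Monad.forget M :=
    parallelPair.ext (Iso.refl _) (Iso.refl _) (by simp; exact (Category.comp_id _).trans (Category.id_comp _).symm) (by simp; exact (Category.comp_id _).trans (Category.id_comp _).symm)
  have e2 : parallelPair (M.toFunctor.map f.f) (M.toFunctor.map g.f) ≅
      (parallelPair f g ⋙ Monad.forget M) ⋙ M.toFunctor :=
    parallelPair.ext (Iso.refl _) (Iso.refl _) (by simp; exact (Category.comp_id _).trans (Category.id_comp _).symm) (by simp; exact (Category.comp_id _).trans (Category.id_comp _).symm)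
  haveI := hM f.f g.f hpf
  haveI := hM (M.toFunctor.map f.f) (M.toFunctor.map g.f) hpMf
  have p1 : PreservesColimit (parallelPair f g ⋙ Monad.forget M) M.toFunctor :=
    preservesColimit_of_iso_diagram M.toFunctor e1
  have p2 : PreservesColimit ((parallelPair f g ⋙ Monad.forget M) ⋙ M.toFunctor) M.toFunctor :=
    preservesColimit_of_iso_diagram M.toFunctor e2
  haveI : CreatesColimit (parallelPair f g) (Monad.forget M) :=
    Monad.forgetCreatesColimit (T := M) (D := parallelPair f g)
  exact hasColimit_of_created (parallelPair f g) (Monad.forget M)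

end Aux

section Main

variable {C : Type u} [Category.{v} C] [HasColimits C] (M : Monad C)
variable (J : Type v) [Category.{v} J]

/-- The counit of the whiskered free-forgetful adjunction is a regular epi pointwise,
hence a regular epi in the functor category. -/
noncomputable def whisker_counit_regularEpi (X : J ⥤ Monad.Algebra M) :
    RegularEpi (((Monad.adj M).whiskerRight J).counit.app X) := by
  letI adj₁ := (Monad.adj M).whiskerRight J
  letI Fr : (J ⥤ C) ⥤ (J ⥤ Monad.Algebra M) := (Functor.whiskeringRight J _ _).obj (Monad.free M)
  letI U : (J ⥤ Monad.Algebra M) ⥤ (J ⥤ C) := (Functor.whiskeringRight J _ _).obj (Monad.forget M)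
  have w : Fr.map (U.map (adj₁.counit.app X)) ≫ adj₁.counit.app X =
      adj₁.counit.app (Fr.obj (U.obj X)) ≫ adj₁.counit.app X :=
    adj₁.counit.naturality (adj₁.counit.app X)
  refine ⟨Fr.obj (U.obj (Fr.obj (U.obj X))),
    Fr.map (U.map (adj₁.counit.app X)), adj₁.counit.app (Fr.obj (U.obj X)), w, ?_⟩
  apply evaluationJointlyReflectsColimits
  intro j
  let e : parallelPair (Monad.FreeCoequalizer.topMap (X.obj j))
      (Monad.FreeCoequalizer.bottomMap (X.obj j)) ≅
      parallelPair (Fr.map (U.map (adj₁.counit.app X)))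
        (adj₁.counit.app (Fr.obj (U.obj X))) ⋙ (evaluation J (Monad.Algebra M)).obj j :=
    parallelPair.ext (Iso.refl _) (Iso.refl _)
      (by ext; simp [adj₁, Fr, U, Monad.FreeCoequalizer.topMap]; erw [Category.comp_id, Category.id_comp]; rfl)
      (by ext; simp [adj₁, Fr, U, Monad.FreeCoequalizer.bottomMap]; erw [Category.comp_id, Category.id_comp]; rfl)
  refine (IsColimit.precomposeHomEquiv e _) ?_
  refine IsColimit.ofIsoColimit (Monad.beckAlgebraCoequalizer (X.obj j))
    (Cocones.ext (Iso.refl _) ?_)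
  rintro (_ | _) <;> ext <;>
    simp [e, adj₁, Fr, U, Monad.FreeCoequalizer.π, Monad.beckAlgebraCofork, parallelPair.ext]
  · change M.map (X.obj j).a ≫ (X.obj j).a = 𝟙 _ ≫ M.map (X.obj j).a ≫ 𝟙 _ ≫ (X.obj j).a
    simp
  · erw [Monad.Algebra.comp_f, Monad.Algebra.id_f, Category.id_comp]; rfl

end Main

/-- If `C` is cocomplete and the monad `M` preserves reflexive coequalizers, then the
Eilenberg–Moore category of `M`-algebras is cocomplete. -/
theorem eilenbergMoore_cocomplete (C : Type u) [Category.{v} C] [HasColimits C]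
    (M : Monad C)
    (hM : ∀ {A B : C} (f g : A ⟶ B), IsReflexivePair f g →
      PreservesColimit (parallelPair f g) M.toFunctor) :
    HasColimits (Monad.Algebra M) := by
  haveI := algebra_hasReflexiveCoequalizers M hM
  refine ⟨fun J _ => ?_⟩
  rw [hasColimitsOfShape_iff_isRightAdjoint_const]
  letI adj₁ := (Monad.adj M).whiskerRight J
  letI U : (J ⥤ Monad.Algebra M) ⥤ (J ⥤ C) := (Functor.whiskeringRight J _ _).obj (Monad.forget M)
  haveI : ∀ X : J ⥤ Monad.Algebra M, RegularEpi (adj₁.counit.app X) := fun X =>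
    whisker_counit_regularEpi M J X
  haveI : (Functor.const J ⋙ U).IsRightAdjoint := by
    have adj2 := (colimConstAdj (J := J) (C := C)).comp (Monad.adj M)
    exact (adj2.ofNatIsoRight
      (NatIso.ofComponents (fun A => NatIso.ofComponents (fun j => Iso.refl _)) (fun f => by ext; simp; rfl) :
        Monad.forget M ⋙ Functor.const J ≅ Functor.const J ⋙ U)).isRightAdjoint
  exact isRightAdjoint_triangle_lift (Functor.const J) adj₁ (fun X => whisker_counit_regularEpi M J X)
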